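/- Under Assumption (β), the spectrum of the bounded extension T of the normalized Laplacian Δ̃ to ℓ²(V, β⁺) is contained in the closed disc D(1,1) of center 1 and radius 1 in ℂ. -/

import Mathlib

open Function Complex
open scoped ENNReal

/-- `β⁺(x) = Σ_y b(x,y)`. -/
noncomputable def betaPlus {V : Type*} (b : V → V → ℝ) (x : V) : ℝ := ∑ᶠ y, b x y

/-- `β⁻(x) = Σ_y b(y,x)`. -/
noncomputable def betaMinus {V : Type*} (b : V → V → ℝ) (x : V) : ℝ := ∑ᶠ y, b y x

/-- The Laplacian `Δf(x) = (1/m(x)) Σ_y b(x,y)(f(x) - f(y))`; the normalized Laplacian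
`Δ̃` is the case `m = β⁺`. -/
noncomputable def lap {V : Type*} (b : V → V → ℝ) (m : V → ℝ) (f : V → ℂ) (x : V) : ℂ :=
  (1 / (m x : ℂ)) * ∑ᶠ y, (b x y : ℂ) * (f x - f y)

/-- The isometric identification of `ℓ²(V, w)` with the standard `ℓ²(V)`:
`f ↦ (x ↦ √(w x) · f x)`. -/
noncomputable def weightEmbed {V : Type*} (w : V → ℝ) (f : V → ℂ) : V → ℂ :=
  fun x => (Real.sqrt (w x) : ℂ) * f x

lemma betaPlus_finset_le {V : Type*} (b : V → V → ℝ) (hb : ∀ x y, 0 ≤ b x y)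
    (hloc : ∀ x, {y | b x y ≠ 0 ∨ b y x ≠ 0}.Finite) (x : V) (A : Finset V) :
    ∑ y ∈ A, b x y ≤ betaPlus b x := by
  classical
  have hsub : support (fun y => b x y) ⊆ ↑(A ∪ (hloc x).toFinset) := by
    intro y hy
    simp only [Finset.coe_union, Set.mem_union, Finset.mem_coe, Set.Finite.coe_toFinset]
    exact Or.inr (Or.inl hy)
  rw [betaPlus, finsum_eq_sum_of_support_subset _ hsub]
  exact Finset.sum_le_sum_of_subset_of_nonneg Finset.subset_union_left
    (fun i _ _ => hb x i)

lemma betaMinus_finset_le {V : Type*} (b : V → V → ℝ) (hb : ∀ x y, 0 ≤ b x y)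
    (hloc : ∀ x, {y | b x y ≠ 0 ∨ b y x ≠ 0}.Finite) (y : V) (A : Finset V) :
    ∑ x ∈ A, b x y ≤ betaMinus b y := by
  classical
  have hsub : support (fun x => b x y) ⊆ ↑(A ∪ (hloc y).toFinset) := by
    intro x hx
    simp only [Finset.coe_union, Set.mem_union, Finset.mem_coe, Set.Finite.coe_toFinset]
    exact Or.inr (Or.inr hx)
  rw [betaMinus, finsum_eq_sum_of_support_subset _ hsub]
  exact Finset.sum_le_sum_of_subset_of_nonneg Finset.subset_union_left
    (fun i _ _ => hb i y)

lemma memlp_two_of_finite {V : Type*} (g : V → ℂ) (h : (support g).Finite) :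
    Memℓp g 2 := by
  apply memℓp_gen
  apply summable_of_ne_finset_zero (s := h.toFinset)
  intro x hx
  have : g x = 0 := by
    by_contra hgx
    exact hx (h.mem_toFinset.2 hgx)
  simp [this]

lemma lap_sub {V : Type*} (b : V → V → ℝ)
    (hloc : ∀ x, {y | b x y ≠ 0 ∨ b y x ≠ 0}.Finite)
    (hβp_pos : ∀ x, 0 < betaPlus b x) (f : V → ℂ) (x : V) :
    lap b (betaPlus b) f x - f x
      = -((1 / (betaPlus b x : ℂ)) * ∑ᶠ y, (b x y : ℂ) * f y) := by
  classical
  set T : Finset V := (hloc x).toFinset with hT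
  have hmem : ∀ y : V, b x y ≠ 0 → y ∈ T := fun y hy =>
    (hloc x).mem_toFinset.2 (Or.inl hy)
  have h1 : ∑ᶠ y, (b x y : ℂ) * (f x - f y) = ∑ y ∈ T, (b x y : ℂ) * (f x - f y) := by
    apply finsum_eq_sum_of_support_subset
    intro y hy
    refine hmem y ?_
    intro h0
    simp [h0] at hy
  have h2 : ∑ᶠ y, (b x y : ℂ) * f y = ∑ y ∈ T, (b x y : ℂ) * f y := by
    apply finsum_eq_sum_of_support_subset
    intro y hy
    refine hmem y ?_
    intro h0
    simp [h0] at hy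
  have h3 : (betaPlus b x : ℂ) = ∑ y ∈ T, (b x y : ℂ) := by
    rw [betaPlus]
    have : ∑ᶠ y, b x y = ∑ y ∈ T, b x y := by
      apply finsum_eq_sum_of_support_subset
      intro y hy
      exact hmem y hy
    rw [this]
    push_cast
    rfl
  have hc : (betaPlus b x : ℂ) ≠ 0 := by
    exact_mod_cast (hβp_pos x).ne'
  rw [lap, h1, h2]
  have hsum : ∑ y ∈ T, (b x y : ℂ) * (f x - f y)
      = (betaPlus b x : ℂ) * f x - ∑ y ∈ T, (b x y : ℂ) * f y := by
    rw [h3, Finset.sum_mul]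
    rw [← Finset.sum_sub_distrib]
    congr 1
    ext y
    ring
  rw [hsum]
  field_simp
  ring

lemma key_norm {V : Type*} (b : V → V → ℝ) (hb : ∀ x y, 0 ≤ b x y)
    (hloc : ∀ x, {y | b x y ≠ 0 ∨ b y x ≠ 0}.Finite)
    (hβp_pos : ∀ x, 0 < betaPlus b x)
    (hβ : ∀ x, betaPlus b x = betaMinus b x)
    (f : V → ℂ) (hf : (support f).Finite)
    (u w : lp (fun _ : V => ℂ) 2)
    (hu : (↑u : V → ℂ) = weightEmbed (betaPlus b) f)
    (hw : (↑w : V → ℂ)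
      = fun x => (Real.sqrt (betaPlus b x) : ℂ) * (lap b (betaPlus b) f x - f x)) :
    ‖w‖ ≤ ‖u‖ := by
  classical
  set S : Finset V := hf.toFinset with hS
  set X : Finset V := S.biUnion (fun y => (hloc y).toFinset) with hX
  have hfS : ∀ y ∉ S, f y = 0 := by
    intro y hy
    by_contra h0
    exact hy (hf.mem_toFinset.2 h0)
  have hsumS : ∀ x, ∑ᶠ y, (b x y : ℂ) * f y = ∑ y ∈ S, (b x y : ℂ) * f y := by
    intro x
    apply finsum_eq_sum_of_support_subset
    intro y hy
    by_contra hyS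
    simp [hfS y hyS] at hy
  -- pointwise bound
  have hwx : ∀ x, ‖(↑w : V → ℂ) x‖ ^ 2 ≤ ∑ y ∈ S, b x y * ‖f y‖ ^ 2 := by
    intro x
    set c : ℝ := betaPlus b x with hcdef
    have hc : 0 < c := hβp_pos x
    set N : ℝ := ‖∑ y ∈ S, (b x y : ℂ) * f y‖ with hN
    set M : ℝ := ∑ y ∈ S, b x y * ‖f y‖ with hM
    set K : ℝ := ∑ y ∈ S, b x y * ‖f y‖ ^ 2 with hK
    have hwval : ‖(↑w : V → ℂ) x‖ = Real.sqrt c * ((1 / c) * N) := by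
      rw [hw]
      simp only
      rw [lap_sub b hloc hβp_pos f x, hsumS x]
      rw [norm_mul, norm_neg, norm_mul, norm_div, norm_one, Complex.norm_real,
        Complex.norm_real, Real.norm_eq_abs, Real.norm_eq_abs,
        _root_.abs_of_nonneg (Real.sqrt_nonneg _), _root_.abs_of_nonneg hc.le]
    have hNM : N ≤ M := by
      refine le_trans (norm_sum_le _ _) ?_
      apply Finset.sum_le_sum
      intro y _
      rw [norm_mul, Complex.norm_real, Real.norm_eq_abs, _root_.abs_of_nonneg (hb x y)]
    have hCS : M ^ 2 ≤ (∑ y ∈ S, b x y) * K := by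
      apply Finset.sum_sq_le_sum_mul_sum_of_sq_eq_mul
      · exact fun i _ => hb x i
      · exact fun i _ => mul_nonneg (hb x i) (sq_nonneg _)
      · intro i _
        ring
    have hKnn : 0 ≤ K := Finset.sum_nonneg fun i _ => mul_nonneg (hb x i) (sq_nonneg _)
    have hble : (∑ y ∈ S, b x y) * K ≤ c * K :=
      mul_le_mul_of_nonneg_right (betaPlus_finset_le b hb hloc x S) hKnn
    have h1 : ‖(↑w : V → ℂ) x‖ ^ 2 = N ^ 2 / c := by
      rw [hwval, mul_pow, mul_pow, Real.sq_sqrt hc.le]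
      field_simp
    have hN2 : N ^ 2 ≤ c * K :=
      le_trans (pow_le_pow_left₀ (norm_nonneg _) hNM 2) (le_trans hCS hble)
    rw [h1, div_le_iff₀ hc]
    calc N ^ 2 ≤ c * K := hN2
    _ = K * c := mul_comm _ _
  -- support of w
  have hw_supp : ∀ x ∉ X, (↑w : V → ℂ) x = 0 := by
    intro x hx
    rw [hw]
    simp only
    rw [lap_sub b hloc hβp_pos f x, hsumS x]
    have : ∑ y ∈ S, (b x y : ℂ) * f y = 0 := by
      apply Finset.sum_eq_zero
      intro y hy
      have hbxy : b x y = 0 := by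
        by_contra h0
        exact hx (Finset.mem_biUnion.2 ⟨y, hy, (hloc y).mem_toFinset.2 (Or.inr h0)⟩)
      simp [hbxy]
    rw [this]
    simp
  have hu_supp : ∀ x ∉ S, (↑u : V → ℂ) x = 0 := by
    intro x hx
    rw [hu, weightEmbed, hfS x hx, mul_zero]
  -- norms as sums
  have hp2 : 0 < (2 : ℝ≥0∞).toReal := by norm_num
  have hcast : ∀ r : ℝ, r ^ (2 : ℝ≥0∞).toReal = r ^ 2 := fun r => by
    rw [show (2 : ℝ≥0∞).toReal = ((2 : ℕ) : ℝ) by norm_num, Real.rpow_natCast]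
  have hnormw : ‖w‖ ^ 2 = ∑' x, ‖(↑w : V → ℂ) x‖ ^ 2 := by
    rw [← hcast ‖w‖, lp.norm_rpow_eq_tsum hp2 w]
    exact tsum_congr fun x => hcast _
  have hnormu : ‖u‖ ^ 2 = ∑' x, ‖(↑u : V → ℂ) x‖ ^ 2 := by
    rw [← hcast ‖u‖, lp.norm_rpow_eq_tsum hp2 u]
    exact tsum_congr fun x => hcast _
  have htw : ∑' x, ‖(↑w : V → ℂ) x‖ ^ 2 = ∑ x ∈ X, ‖(↑w : V → ℂ) x‖ ^ 2 :=
    tsum_eq_sum fun x hx => by rw [hw_supp x hx]; simp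
  have htu : ∑' x, ‖(↑u : V → ℂ) x‖ ^ 2 = ∑ x ∈ S, ‖(↑u : V → ℂ) x‖ ^ 2 :=
    tsum_eq_sum fun x hx => by rw [hu_supp x hx]; simp
  have hux : ∀ x, ‖(↑u : V → ℂ) x‖ ^ 2 = betaPlus b x * ‖f x‖ ^ 2 := by
    intro x
    rw [hu, weightEmbed]
    simp only
    rw [norm_mul, Complex.norm_real, Real.norm_eq_abs,
      _root_.abs_of_nonneg (Real.sqrt_nonneg _), mul_pow, Real.sq_sqrt (hβp_pos x).le]
  have hmain : ∑ x ∈ X, ‖(↑w : V → ℂ) x‖ ^ 2 ≤ ∑ x ∈ S, ‖(↑u : V → ℂ) x‖ ^ 2 := by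
    calc ∑ x ∈ X, ‖(↑w : V → ℂ) x‖ ^ 2
        ≤ ∑ x ∈ X, ∑ y ∈ S, b x y * ‖f y‖ ^ 2 := Finset.sum_le_sum fun x _ => hwx x
      _ = ∑ y ∈ S, ∑ x ∈ X, b x y * ‖f y‖ ^ 2 := Finset.sum_comm
      _ = ∑ y ∈ S, (∑ x ∈ X, b x y) * ‖f y‖ ^ 2 := by
          refine Finset.sum_congr rfl fun y _ => ?_
          rw [Finset.sum_mul]
      _ ≤ ∑ y ∈ S, betaMinus b y * ‖f y‖ ^ 2 := by
          refine Finset.sum_le_sum fun y _ => ?_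
          exact mul_le_mul_of_nonneg_right (betaMinus_finset_le b hb hloc y X) (sq_nonneg _)
      _ = ∑ y ∈ S, betaPlus b y * ‖f y‖ ^ 2 := by
          refine Finset.sum_congr rfl fun y _ => ?_
          rw [hβ y]
      _ = ∑ x ∈ S, ‖(↑u : V → ℂ) x‖ ^ 2 := by
          refine Finset.sum_congr rfl fun y _ => ?_
          rw [hux y]
  have hfinal : ‖w‖ ^ 2 ≤ ‖u‖ ^ 2 := by
    rw [hnormw, hnormu, htw, htu]
    exact hmain
  exact (pow_le_pow_iff_left₀ (norm_nonneg w) (norm_nonneg u) two_ne_zero).1 hfinal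

/-- Under Assumption (β), the spectrum of the bounded extension `T` of the
normalized Laplacian `Δ̃` to `ℓ²(V, β⁺)` (realized as the standard `ℓ²(V)` via the
isometry `f ↦ √β⁺ · f`) is contained in the closed disc `D(1,1)` in `ℂ`. -/
theorem spectrum_in_disc
    (V : Type*) [Countable V] (b : V → V → ℝ)
    (hb_nonneg : ∀ x y, 0 ≤ b x y)
    (hb_loop : ∀ x, b x x = 0)
    (hloc_fin : ∀ x, {y | b x y ≠ 0 ∨ b y x ≠ 0}.Finite)
    (hβp_pos : ∀ x, 0 < betaPlus b x)
    (hβm_pos : ∀ x, 0 < betaMinus b x)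
    (hβ : ∀ x, betaPlus b x = betaMinus b x)
    (T : lp (fun _ : V => ℂ) 2 →L[ℂ] lp (fun _ : V => ℂ) 2)
    (hT : ∀ (f : V → ℂ), (support f).Finite →
      ∀ u v : lp (fun _ : V => ℂ) 2,
        (↑u : V → ℂ) = weightEmbed (betaPlus b) f →
        (↑v : V → ℂ) = weightEmbed (betaPlus b) (lap b (betaPlus b) f) →
        T u = v) :
    spectrum ℂ T ⊆ Metric.closedBall (1 : ℂ) 1 := by
  classical
  set Sop : lp (fun _ : V => ℂ) 2 →L[ℂ] lp (fun _ : V => ℂ) 2 := T - 1 with hSop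
  -- Step 1: the bound on finitely supported elements
  have hfin : ∀ u : lp (fun _ : V => ℂ) 2, (support (↑u : V → ℂ)).Finite →
      ‖Sop u‖ ≤ ‖u‖ := by
    intro u hu
    set f : V → ℂ := fun x => (↑u : V → ℂ) x / (Real.sqrt (betaPlus b x) : ℂ) with hfdef
    have hsqrt_ne : ∀ x, (Real.sqrt (betaPlus b x) : ℂ) ≠ 0 := by
      intro x
      simp only [ne_eq, Complex.ofReal_eq_zero]
      exact (Real.sqrt_pos.2 (hβp_pos x)).ne'
    have hfsupp : (support f).Finite := by
      apply hu.subset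
      intro x hx
      simp only [hfdef, mem_support, ne_eq] at hx ⊢
      intro h0
      apply hx
      rw [h0, zero_div]
    have hueq : (↑u : V → ℂ) = weightEmbed (betaPlus b) f := by
      funext x
      rw [weightEmbed]
      simp only [hfdef]
      rw [mul_comm, div_mul_cancel₀ _ (hsqrt_ne x)]
    -- the image function has finite support
    have hlapsupp : (support (weightEmbed (betaPlus b) (lap b (betaPlus b) f))).Finite := by
      have hsub : support (weightEmbed (betaPlus b) (lap b (betaPlus b) f)) ⊆
          support f ∪ ⋃ y ∈ support f, {x | b y x ≠ 0 ∨ b x y ≠ 0} := by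
        intro x hx
        simp only [mem_support, weightEmbed, ne_eq] at hx
        have hlap : lap b (betaPlus b) f x ≠ 0 := by
          intro h0
          exact hx (by rw [h0, mul_zero])
        have hsum_ne : ∑ᶠ y, (b x y : ℂ) * (f x - f y) ≠ 0 := by
          intro h0
          apply hlap
          rw [lap, h0, mul_zero]
        obtain ⟨y, hy⟩ : ∃ y, (b x y : ℂ) * (f x - f y) ≠ 0 := by
          by_contra hall
          push_neg at hall
          exact hsum_ne (finsum_eq_zero_of_forall_eq_zero hall)
        have hbxy : b x y ≠ 0 := by
          intro h0
          simp [h0] at hy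
        have hdif : f x ≠ f y := by
          intro h0
          simp [h0] at hy
        by_cases hfx : f x = 0
        · have hfy : f y ≠ 0 := by
            intro h0
            exact hdif (hfx.trans h0.symm)
          refine Or.inr ?_
          refine Set.mem_biUnion hfy ?_
          exact Or.inr hbxy
        · exact Or.inl hfx
      refine Set.Finite.subset ?_ hsub
      exact hfsupp.union (hfsupp.biUnion fun y _ => hloc_fin y)
    set v : lp (fun _ : V => ℂ) 2 :=
      ⟨weightEmbed (betaPlus b) (lap b (betaPlus b) f),
        memlp_two_of_finite _ hlapsupp⟩ with hv
    have hveq : (↑v : V → ℂ) = weightEmbed (betaPlus b) (lap b (betaPlus b) f) := rfl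
    have hTu : T u = v := hT f hfsupp u v hueq hveq
    have hSu : Sop u = v - u := by
      rw [hSop]
      simp only [ContinuousLinearMap.sub_apply, ContinuousLinearMap.one_apply]
      rw [hTu]
    rw [hSu]
    refine key_norm b hb_nonneg hloc_fin hβp_pos hβ f hfsupp u (v - u) hueq ?_
    funext x
    have : (↑(v - u) : V → ℂ) x = (↑v : V → ℂ) x - (↑u : V → ℂ) x := by
      rw [lp.coeFn_sub, Pi.sub_apply]
    rw [this, hveq, hueq, weightEmbed, weightEmbed]
    simp only
    rw [← mul_sub]
  -- Step 2: extend the bound to all of ℓ² by density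
  have hall : ∀ u : lp (fun _ : V => ℂ) 2, ‖Sop u‖ ≤ ‖u‖ := by
    intro u
    have hcl : IsClosed {v : lp (fun _ : V => ℂ) 2 | ‖Sop v‖ ≤ ‖v‖} :=
      isClosed_le (Sop.continuous.norm) continuous_norm
    have hsum : HasSum (fun i : V => lp.single 2 i ((↑u : V → ℂ) i)) u :=
      lp.hasSum_single (by norm_num) u
    refine hcl.mem_of_tendsto hsum (Filter.Eventually.of_forall fun s => ?_)
    refine hfin _ ?_
    refine Set.Finite.subset s.finite_toSet ?_
    intro x hx
    simp only [mem_support, ne_eq] at hx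
    by_contra hxs
    apply hx
    rw [lp.coeFn_sum, Finset.sum_apply]
    apply Finset.sum_eq_zero
    intro i hi
    have : x ≠ i := by
      intro h0
      exact hxs (h0 ▸ hi)
    exact lp.single_apply_ne 2 i _ this
  have hnorm : ‖Sop‖ ≤ 1 :=
    ContinuousLinearMap.opNorm_le_bound _ zero_le_one fun u => by
      rw [one_mul]; exact hall u
  -- Step 3: spectral mapping
  intro z hz
  have hz' : z - 1 ∈ spectrum ℂ Sop := by
    rw [spectrum.mem_iff] at hz ⊢
    have : algebraMap ℂ _ (z - 1) - Sop = algebraMap ℂ _ z - T := by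
      rw [map_sub, map_one, hSop, sub_sub_sub_cancel_right]
    rw [this]
    exact hz
  have hball := spectrum.subset_closedBall_norm_mul (𝕜 := ℂ) Sop hz'
  rw [Metric.mem_closedBall, dist_zero_right] at hball
  rw [Metric.mem_closedBall, dist_eq_norm]
  refine le_trans hball ?_
  calc ‖Sop‖ * ‖(1 : lp (fun _ : V => ℂ) 2 →L[ℂ] lp (fun _ : V => ℂ) 2)‖
      ≤ 1 * 1 := by
        apply mul_le_mul hnorm ?_ (norm_nonneg _) zero_le_one
        rw [ContinuousLinearMap.one_def]
        exact ContinuousLinearMap.norm_id_le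
    _ = 1 := one_mul 1
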